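/- Equivalence of feedback optimization and adapted-process optimization (finite case): let W_0,...,W_T be finite nonempty sets, U_0,...,U_{T-1} finite nonempty sets, and let the noise (W_0,...,W_T) be a random process on a finite probability space. For each t and history h_t, the infimum over history feedbacks γ_{t:T-1} of the conditional expectation of j evaluated along the flow equals the infimum over all control processes (U_t,...,U_{T-1}) adapted to the noise filtration (σ(U_s) ⊆ σ(W_{t+1},...,W_s)) of E[ j(h_t, U_t, W_{t+1}, ..., U_{T-1}, W_T) | W_{0:t} = uncertainty part of h_t ]. -/
import Mathlib


open scoped ENNReal
open Classical

/-- History space `H_t = W_0 × ∏_{s=0}^{t-1}(U_s × W_{s+1})`. -/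
def Hist (W U : ℕ → Type) : ℕ → Type :=
  fun t => Nat.rec (motive := fun _ => Type) (W 0) (fun s ih => ih × U s × W (s + 1)) t

/-- Transport of a history along an equality of time indices. -/
def hcast {W U : ℕ → Type} {a b : ℕ} (e : a = b) (h : Hist W U a) : Hist W U b := e ▸ h

/-- `agrees Wp t h ω` says that the noise process `(W_0,…,W_t)` at the sample point `ω`
coincides with the uncertainty part `(w_0,…,w_t)` of the history `h ∈ H_t`. -/
def agrees {W U : ℕ → Type} {Ω : Type} (Wp : ∀ s, Ω → W s) :
    ∀ t, Hist W U t → Ω → Prop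
  | 0, h, ω => Wp 0 ω = h
  | t + 1, h, ω => agrees Wp t h.1 ω ∧ Wp (t + 1) ω = h.2.2

/-- Conditional expectation of `F` given the event `c`, on a weighted sample space. -/
noncomputable def condE {Ω : Type} (P : Ω → ℝ≥0∞) (c : Ω → Prop) (F : Ω → ℝ≥0∞) : ℝ≥0∞ :=
  (∑' ω : Ω, if c ω then F ω * P ω else 0) / (∑' ω : Ω, if c ω then P ω else 0)

/-- The random history obtained from `h_t` by iterating a family of history feedbacks `γ`
along the realized noises `W_{t+1}(ω), …`: `Φ_{t,T}^γ(h_t, W_{t+1:T}(ω))`. -/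
def flowRV {W U : ℕ → Type} {Ω : Type} (γ : ∀ s, Hist W U s → U s)
    (Wp : ∀ s, Ω → W s) :
    ∀ (n t : ℕ), Hist W U t → Ω → Hist W U (t + n)
  | 0, _, h, _ => h
  | n + 1, t, h, ω =>
      (flowRV γ Wp n t h ω, γ (t + n) (flowRV γ Wp n t h ω), Wp (t + n + 1) ω)

/-- The random history `(h_t, U_t, W_{t+1}, …, U_{T-1}, W_T)` obtained from `h_t` by a
control process `Up` and the realized noises. -/
def flowU {W U : ℕ → Type} {Ω : Type} (Up : ∀ s, Ω → U s)
    (Wp : ∀ s, Ω → W s) :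
    ∀ (n t : ℕ), Hist W U t → Ω → Hist W U (t + n)
  | 0, _, h, _ => h
  | n + 1, t, h, ω => (flowU Up Wp n t h ω, Up (t + n) ω, Wp (t + n + 1) ω)

/-! ### Auxiliary lemmas -/

lemma flowRV_cast {W U : ℕ → Type} {Ω : Type} (γ : ∀ s, Hist W U s → U s)
    (Wp : ∀ s, Ω → W s) (t : ℕ) (h : Hist W U t) (ω : Ω) :
    ∀ k k', k = k' → ∀ (e : t + k = t + k'),
      hcast e (flowRV γ Wp k t h ω) = flowRV γ Wp k' t h ω := by
  rintro k _ rfl e; rfl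

lemma flowU_cast {W U : ℕ → Type} {Ω : Type} (Up : ∀ s, Ω → U s)
    (Wp : ∀ s, Ω → W s) (t : ℕ) (h : Hist W U t) (ω : Ω) :
    ∀ k k', k = k' → ∀ (e : t + k = t + k'),
      hcast e (flowU Up Wp k t h ω) = flowU Up Wp k' t h ω := by
  rintro k _ rfl e; rfl

/-- Equality of `flowU`-histories forces equality of the realized noises. -/
lemma flowU_noise {W U : ℕ → Type} {Ω : Type} (Up : ∀ s, Ω → U s)
    (Wp : ∀ s, Ω → W s) (t : ℕ) (h : Hist W U t) :
    ∀ k (ω ω' : Ω), flowU Up Wp k t h ω = flowU Up Wp k t h ω' →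
      ∀ r, t < r → r ≤ t + k → Wp r ω = Wp r ω' := by
  intro k
  induction k with
  | zero => intro ω ω' _ r hr hr'; omega
  | succ k ih =>
      intro ω ω' heq r hr hr'
      have h1 : flowU Up Wp k t h ω = flowU Up Wp k t h ω' :=
        congrArg Prod.fst heq
      rcases Nat.lt_or_ge r (t + k + 1) with hlt | hge
      · exact ih ω ω' h1 r hr (by omega)
      · have : r = t + k + 1 := by omega
        subst this
        exact congrArg (fun p => p.2.2) heq

/-- Feedback built from an adapted control process. -/
noncomputable def gammaOf {W U : ℕ → Type} {Ω : Type} [∀ s, Nonempty (U s)]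
    (Up : ∀ s, Ω → U s) (Wp : ∀ s, Ω → W s) (t : ℕ) (h : Hist W U t) :
    ∀ s, Hist W U s → U s :=
  fun s h' =>
    if hx : ∃ ω : Ω, ∃ k : ℕ, ∃ hk : t + k = s, hcast hk (flowU Up Wp k t h ω) = h' then
      Up s hx.choose
    else Classical.arbitrary _

lemma gammaOf_spec {W U : ℕ → Type} {Ω : Type} [∀ s, Nonempty (U s)]
    (Up : ∀ s, Ω → U s) (Wp : ∀ s, Ω → W s) (t : ℕ) (h : Hist W U t)
    (had : ∀ (s : ℕ) (ω ω' : Ω),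
      (∀ r, t < r → r ≤ s → Wp r ω = Wp r ω') → Up s ω = Up s ω')
    (k : ℕ) (ω : Ω) :
    gammaOf Up Wp t h (t + k) (flowU Up Wp k t h ω) = Up (t + k) ω := by
  have hx : ∃ ω' : Ω, ∃ k' : ℕ, ∃ hk : t + k' = t + k,
      hcast hk (flowU Up Wp k' t h ω') = flowU Up Wp k t h ω :=
    ⟨ω, k, rfl, rfl⟩
  rw [gammaOf, dif_pos hx]
  obtain ⟨k', hk', hflow⟩ := hx.choose_spec
  have hkk : k' = k := by omega
  rw [flowU_cast Up Wp t h _ k' k hkk hk'] at hflow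
  exact had (t + k) hx.choose ω (flowU_noise Up Wp t h k _ ω hflow)

lemma flowRV_gammaOf {W U : ℕ → Type} {Ω : Type} [∀ s, Nonempty (U s)]
    (Up : ∀ s, Ω → U s) (Wp : ∀ s, Ω → W s) (t : ℕ) (h : Hist W U t)
    (had : ∀ (s : ℕ) (ω ω' : Ω),
      (∀ r, t < r → r ≤ s → Wp r ω = Wp r ω') → Up s ω = Up s ω')
    (k : ℕ) (ω : Ω) :
    flowRV (gammaOf Up Wp t h) Wp k t h ω = flowU Up Wp k t h ω := by
  induction k with
  | zero => rfl
  | succ k ih =>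
      show (_, _, _) = (_, _, _)
      rw [ih, gammaOf_spec Up Wp t h had k ω]

/-- `flowRV` depends only on the noises at times `t+1, …, t+k`. -/
lemma flowRV_local {W U : ℕ → Type} {Ω : Type} (γ : ∀ s, Hist W U s → U s)
    (Wp : ∀ s, Ω → W s) (t : ℕ) (h : Hist W U t) :
    ∀ k (ω ω' : Ω), (∀ r, t < r → r ≤ t + k → Wp r ω = Wp r ω') →
      flowRV γ Wp k t h ω = flowRV γ Wp k t h ω' := by
  intro k
  induction k with
  | zero => intro ω ω' _; rfl
  | succ k ih =>
      intro ω ω' hw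
      have h1 : flowRV γ Wp k t h ω = flowRV γ Wp k t h ω' :=
        ih ω ω' fun r hr hr' => hw r hr (by omega)
      show (_, _, _) = (_, _, _)
      rw [h1, hw (t + k + 1) (by omega) (by omega)]

/-- Adapted control process built from a feedback. -/
noncomputable def upOf {W U : ℕ → Type} {Ω : Type} [∀ s, Nonempty (U s)]
    (γ : ∀ s, Hist W U s → U s) (Wp : ∀ s, Ω → W s) (t : ℕ) (h : Hist W U t) :
    ∀ s, Ω → U s :=
  fun s ω =>
    if hs : t ≤ s then
      γ s (hcast (by omega) (flowRV γ Wp (s - t) t h ω))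
    else Classical.arbitrary _

lemma upOf_adapted {W U : ℕ → Type} {Ω : Type} [∀ s, Nonempty (U s)]
    (γ : ∀ s, Hist W U s → U s) (Wp : ∀ s, Ω → W s) (t : ℕ) (h : Hist W U t) :
    ∀ (s : ℕ) (ω ω' : Ω),
      (∀ r, t < r → r ≤ s → Wp r ω = Wp r ω') →
      upOf γ Wp t h s ω = upOf γ Wp t h s ω' := by
  intro s ω ω' hw
  unfold upOf
  by_cases hs : t ≤ s
  · rw [dif_pos hs, dif_pos hs,
      flowRV_local γ Wp t h (s - t) ω ω' fun r hr hr' => hw r hr (by omega)]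
  · rw [dif_neg hs, dif_neg hs]

lemma flowU_upOf {W U : ℕ → Type} {Ω : Type} [∀ s, Nonempty (U s)]
    (γ : ∀ s, Hist W U s → U s) (Wp : ∀ s, Ω → W s) (t : ℕ) (h : Hist W U t)
    (k : ℕ) (ω : Ω) :
    flowU (upOf γ Wp t h) Wp k t h ω = flowRV γ Wp k t h ω := by
  induction k with
  | zero => rfl
  | succ k ih =>
      show (_, _, _) = (_, _, _)
      have hup : upOf γ Wp t h (t + k) ω = γ (t + k) (flowRV γ Wp k t h ω) := by
        rw [upOf, dif_pos (by omega)]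
        congr 1
        exact flowRV_cast γ Wp t h ω (t + k - t) k (by omega) _
      rw [ih, hup]

/-- equivalence of feedback optimization and adapted-process optimization
(finite case). For each `t` and history `h_t` (with conditioning event of positive
probability), the infimum over history feedbacks `γ` of
`E[ j(Φ_{t,T}^γ(h_t, W_{t+1:T})) | W_{0:t} = unc(h_t) ]` equals the infimum over all control
processes `(U_t,…,U_{T-1})` adapted to the noise filtration (`σ(U_s) ⊆ σ(W_{t+1},…,W_s)`,
so that `U_t` is deterministic) of
`E[ j(h_t, U_t, W_{t+1}, …, U_{T-1}, W_T) | W_{0:t} = unc(h_t) ]`. -/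
theorem feedback_vs_adapted {W U : ℕ → Type}
    [∀ s, Fintype (W s)] [∀ s, Nonempty (W s)] [∀ s, Fintype (U s)] [∀ s, Nonempty (U s)]
    {Ω : Type} [Fintype Ω] [Nonempty Ω]
    (P : Ω → ℝ≥0∞) (hP : ∑' ω : Ω, P ω = 1)
    (Wp : ∀ s, Ω → W s)
    (T : ℕ) (j : Hist W U T → ℝ≥0∞)
    (n t : ℕ) (e : t + n = T) (h : Hist W U t)
    (hpos : 0 < ∑' ω : Ω, if agrees Wp t h ω then P ω else 0) :
    (⨅ γ : ∀ s, Hist W U s → U s,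
        condE P (agrees Wp t h) (fun ω => j (hcast e (flowRV γ Wp n t h ω))))
      = ⨅ Up : {Up : ∀ s, Ω → U s //
            ∀ (s : ℕ) (ω ω' : Ω),
              (∀ r, t < r → r ≤ s → Wp r ω = Wp r ω') → Up s ω = Up s ω'},
          condE P (agrees Wp t h) (fun ω => j (hcast e (flowU Up.1 Wp n t h ω))) := by
  apply le_antisymm
  · refine le_iInf fun Up => iInf_le_of_le (gammaOf Up.1 Wp t h) (le_of_eq ?_)
    congr 1
    funext ω
    rw [flowRV_gammaOf Up.1 Wp t h Up.2 n ω]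
  · refine le_iInf fun γ =>
      iInf_le_of_le ⟨upOf γ Wp t h, upOf_adapted γ Wp t h⟩ (le_of_eq ?_)
    congr 1
    funext ω
    rw [flowU_upOf γ Wp t h n ω]
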